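/- Let α ≥ 1 be a natural number, let x_i ∈ ℝ, and let f, Q : ℝ → ℝ be functions of class C^(α+1) such that the iterated derivatives of f of all orders j with 0 ≤ j ≤ α − 1 vanish at x_i (i.e., f has a zero of multiplicity at least α at x_i). Define Φ(x) = (α + 1)·((x − x_i)·f'(x) − α·f(x))·Q(x) − (x − x_i)·f(x)·Q'(x). Then the iterated derivatives of Φ of all orders j with 0 ≤ j ≤ α vanish at x_i: Φ(x_i) = Φ'(x_i) = ⋯ = Φ^(α)(x_i) = 0. -/

import Mathlib

open Set

private lemma itd_add {n : ℕ} {u v : ℝ → ℝ} (hu : ContDiff ℝ n u) (hv : ContDiff ℝ n v) (x : ℝ) :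
    iteratedDeriv n (fun y => u y + v y) x = iteratedDeriv n u x + iteratedDeriv n v x := by
  rw [← iteratedDerivWithin_univ, ← iteratedDerivWithin_univ, ← iteratedDerivWithin_univ]
  exact iteratedDerivWithin_add (mem_univ x) uniqueDiffOn_univ hu.contDiffWithinAt hv.contDiffWithinAt

private lemma itd_sub {n : ℕ} {u v : ℝ → ℝ} (hu : ContDiff ℝ n u) (hv : ContDiff ℝ n v) (x : ℝ) :
    iteratedDeriv n (fun y => u y - v y) x = iteratedDeriv n u x - iteratedDeriv n v x := by
  rw [← iteratedDerivWithin_univ, ← iteratedDerivWithin_univ, ← iteratedDerivWithin_univ]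
  exact iteratedDerivWithin_sub (mem_univ x) uniqueDiffOn_univ hu.contDiffWithinAt hv.contDiffWithinAt

private lemma itd_const_mul {n : ℕ} {u : ℝ → ℝ} (hu : ContDiff ℝ n u) (c : ℝ) (x : ℝ) :
    iteratedDeriv n (fun y => c * u y) x = c * iteratedDeriv n u x := by
  rw [← iteratedDerivWithin_univ, ← iteratedDerivWithin_univ]
  exact iteratedDerivWithin_const_mul (mem_univ x) uniqueDiffOn_univ c hu.contDiffWithinAt

/-- Leibniz formula for a product with the linear factor `x - xi`. -/
private lemma linfac (xi : ℝ) {n : ℕ} (g : ℝ → ℝ) (hg : ContDiff ℝ n g) :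
    ∀ k, k + 1 ≤ n → ∀ x, iteratedDeriv (k + 1) (fun y => (y - xi) * g y) x
      = (x - xi) * iteratedDeriv (k + 1) g x + (k + 1) * iteratedDeriv k g x := by
  intro k
  induction k with
  | zero =>
    intro hk x
    have hgd : DifferentiableAt ℝ g x :=
      (hg.differentiable (by exact_mod_cast (show n ≠ 0 by omega))).differentiableAt
    have H : HasDerivAt (fun y => (y - xi) * g y) (1 * g x + (x - xi) * deriv g x) x :=
      ((hasDerivAt_id x).sub_const xi).mul hgd.hasDerivAt
    rw [iteratedDeriv_one, H.deriv]
    simp [iteratedDeriv_one]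
    ring
  | succ k ih =>
    intro hk x
    have h1 : DifferentiableAt ℝ (iteratedDeriv (k + 1) g) x :=
      (hg.differentiable_iteratedDeriv (k + 1) (by exact_mod_cast hk)).differentiableAt
    have h2 : DifferentiableAt ℝ (iteratedDeriv k g) x :=
      (hg.differentiable_iteratedDeriv k (by exact_mod_cast (by omega : k < n))).differentiableAt
    have hfun : iteratedDeriv (k + 1) (fun y => (y - xi) * g y)
        = fun x => (x - xi) * iteratedDeriv (k + 1) g x
            + ((k : ℝ) + 1) * iteratedDeriv k g x := by
      funext y
      have := ih (by omega) y
      push_cast at this ⊢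
      exact this
    have H1 : HasDerivAt (fun x => (x - xi) * iteratedDeriv (k + 1) g x)
        (1 * iteratedDeriv (k + 1) g x + (x - xi) * deriv (iteratedDeriv (k + 1) g) x) x :=
      ((hasDerivAt_id x).sub_const xi).mul h1.hasDerivAt
    have H2 : HasDerivAt (fun x => ((k : ℝ) + 1) * iteratedDeriv k g x)
        (((k : ℝ) + 1) * deriv (iteratedDeriv k g) x) x := h2.hasDerivAt.const_mul _
    rw [iteratedDeriv_succ, hfun, show deriv (fun x => (x - xi) * iteratedDeriv (k + 1) g x
        + ((k : ℝ) + 1) * iteratedDeriv k g x) x = _ from (H1.add H2).deriv]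
    rw [show deriv (iteratedDeriv (k + 1) g) = iteratedDeriv (k + 2) g from
        (iteratedDeriv_succ).symm,
      show deriv (iteratedDeriv k g) = iteratedDeriv (k + 1) g from (iteratedDeriv_succ).symm]
    push_cast
    ring

/-- If all derivatives of `h` up to order `n` vanish at `xi`, then so do all derivatives of
`h * g` up to order `n`. -/
private lemma vanish_mul (xi : ℝ) : ∀ n : ℕ, ∀ h g : ℝ → ℝ, ContDiff ℝ n h → ContDiff ℝ n g →
    (∀ j, j ≤ n → iteratedDeriv j h xi = 0) →
    ∀ j, j ≤ n → iteratedDeriv j (fun x => h x * g x) xi = 0 := by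
  intro n
  induction n with
  | zero =>
    intro h g _ _ hz j hj
    interval_cases j
    have h0 := hz 0 le_rfl
    rw [iteratedDeriv_zero] at h0
    simp only [iteratedDeriv_zero]
    rw [h0, zero_mul]
  | succ n ih =>
    intro h g hh hg hz j hj
    match j with
    | 0 =>
      have h0 := hz 0 (by omega)
      rw [iteratedDeriv_zero] at h0
      simp only [iteratedDeriv_zero]
      rw [h0, zero_mul]
    | m + 1 =>
      have hh1 : ContDiff ℝ ((n : WithTop ℕ∞) + 1) h := by exact_mod_cast hh
      have hg1 : ContDiff ℝ ((n : WithTop ℕ∞) + 1) g := by exact_mod_cast hg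
      have hh' : ContDiff ℝ n (deriv h) := (contDiff_succ_iff_deriv.mp hh1).2.2
      have hg' : ContDiff ℝ n (deriv g) := (contDiff_succ_iff_deriv.mp hg1).2.2
      have hhn : ContDiff ℝ n h := hh1.of_succ
      have hgn : ContDiff ℝ n g := hg1.of_succ
      have hm : m ≤ n := by omega
      have hd : deriv (fun x => h x * g x) = fun x => deriv h x * g x + h x * deriv g x := by
        funext x
        exact deriv_mul ((hh1.differentiable (by simp)) x) ((hg1.differentiable (by simp)) x)
      rw [iteratedDeriv_succ', hd,
        itd_add ((hh'.mul hgn).of_le (by exact_mod_cast hm))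
          ((hhn.mul hg').of_le (by exact_mod_cast hm)) xi,
        ih (deriv h) g hh' hgn
          (fun j hj => by rw [← iteratedDeriv_succ']; exact hz (j + 1) (by omega)) m hm,
        ih h (deriv g) hhn hg' (fun j hj => hz j (by omega)) m hm, add_zero]

/-- Claim (7) of the paper: the numerator function `Φ` of (6) and all its
derivatives up to order `α` vanish at `x_i`. -/
theorem obreshkoff_ehrlich_Phi_vanishing
    (α : ℕ) (hα : 1 ≤ α) (xi : ℝ) (f Q : ℝ → ℝ)
    (hf : ContDiff ℝ (α + 1) f) (hQ : ContDiff ℝ (α + 1) Q)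
    (hzero : ∀ j, j ≤ α - 1 → iteratedDeriv j f xi = 0)
    (Φ : ℝ → ℝ)
    (hΦ : Φ = fun x => ((α : ℝ) + 1) * ((x - xi) * deriv f x - (α : ℝ) * f x) * Q x
        - (x - xi) * f x * deriv Q x) :
    ∀ j, j ≤ α → iteratedDeriv j Φ xi = 0 := by
  set A : ℝ → ℝ := fun x => ((α : ℝ) + 1) * ((x - xi) * deriv f x - (α : ℝ) * f x) with hA_def
  set B : ℝ → ℝ := fun x => (x - xi) * f x with hB_def
  have hf' : ContDiff ℝ α (deriv f) := (contDiff_succ_iff_deriv.mp hf).2.2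
  have hQ' : ContDiff ℝ α (deriv Q) := (contDiff_succ_iff_deriv.mp hQ).2.2
  have hfα : ContDiff ℝ α f := hf.of_succ
  have hQα : ContDiff ℝ α Q := hQ.of_succ
  have hlin : ContDiff ℝ α (fun x : ℝ => x - xi) := contDiff_id.sub contDiff_const
  have hA : ContDiff ℝ α A :=
    contDiff_const.mul ((hlin.mul hf').sub (contDiff_const.mul hfα))
  have hB : ContDiff ℝ α B := hlin.mul hfα
  -- derivatives of A up to order α vanish at xi
  have hAz : ∀ k, k ≤ α → iteratedDeriv k A xi = 0 := by
    intro k hk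
    match k with
    | 0 =>
      have h0 := hzero 0 (by omega)
      rw [iteratedDeriv_zero] at h0
      simp only [iteratedDeriv_zero, hA_def]
      rw [h0, sub_self]
      ring
    | m + 1 =>
      have hcast : (((m + 1 : ℕ)) : WithTop ℕ∞) ≤ (α : WithTop ℕ∞) := by exact_mod_cast hk
      rw [hA_def]
      rw [itd_const_mul (((hlin.mul hf').sub (contDiff_const.mul hfα)).of_le hcast) _ xi,
        itd_sub ((hlin.mul hf').of_le hcast) ((contDiff_const.mul hfα).of_le hcast) xi,
        itd_const_mul (hfα.of_le hcast) _ xi,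
        linfac xi (deriv f) hf' m hk xi]
      have hds : iteratedDeriv m (deriv f) xi = iteratedDeriv (m + 1) f xi := by
        rw [← iteratedDeriv_succ']
      rw [hds]
      rcases Nat.lt_or_ge (m + 1) α with hlt | hge
      · rw [hzero (m + 1) (by omega)]; ring
      · have heq : m + 1 = α := le_antisymm hk hge
        have : ((m : ℝ) + 1) = (α : ℝ) := by exact_mod_cast congrArg (Nat.cast : ℕ → ℝ) heq
        rw [sub_self, zero_mul, zero_add, this]
        ring
  -- derivatives of B up to order α vanish at xi
  have hBz : ∀ k, k ≤ α → iteratedDeriv k B xi = 0 := by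
    intro k hk
    match k with
    | 0 => simp [hB_def]
    | m + 1 =>
      rw [hB_def, linfac xi f hfα m hk xi, hzero m (by omega)]
      ring
  intro j hj
  have hjc : (j : WithTop ℕ∞) ≤ (α : WithTop ℕ∞) := by exact_mod_cast hj
  have hΦ' : Φ = fun x => A x * Q x - B x * deriv Q x := by rw [hΦ]
  rw [hΦ', itd_sub ((hA.mul hQα).of_le hjc) ((hB.mul hQ').of_le hjc) xi,
    vanish_mul xi α A Q hA hQα hAz j hj,
    vanish_mul xi α B (deriv Q) hB hQ' hBz j hj, sub_zero]
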